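/- arXiv:1910.00670 — 2 statements merged into one kernel-verified Lean document; each statement's English description precedes it below -/
import Mathlib

section
/- Let Γ and Ω be two finite simple connected graphs with the same vertex set such that every edge of Ω is an edge of Γ. Let T be a tubing of Γ and S a tubing of Γ_T^*, and set T̂ := res_Ω^Γ(T). Then: (1) the graphs Γ_T^* and Ω_{T̂}^* have the same vertex set, and every edge of Ω_{T̂}^* is an edge of Γ_T^*; and (2) res_Ω^Γ(T •_Γ S) = T̂ •_Ω Ŝ, where Ŝ := res_{Ω_{T̂}^*}^{Γ_T^*}(S). -/
open scoped Classical
open TensorProduct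

noncomputable section

/-- A finite simple graph whose vertices are a finite set of (totally ordered) naturals. -/
structure FinGraph : Type where
  verts : Finset ℕ
  Adj : ℕ → ℕ → Prop
  symm : ∀ v w, Adj v w → Adj w v
  loopless : ∀ v, ¬ Adj v v
  support : ∀ v w, Adj v w → v ∈ verts ∧ w ∈ verts

namespace CDTub

/-- Connectivity of a vertex set within a graph: any two of its vertices are joined by a
walk staying inside the set. -/
def VConn (G : FinGraph) (s : Finset ℕ) : Prop :=
  ∀ v ∈ s, ∀ w ∈ s, Relation.ReflTransGen (fun a b => a ∈ s ∧ b ∈ s ∧ G.Adj a b) v w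

/-- A tube: a nonempty set of vertices inducing a connected subgraph. -/
def IsTube (G : FinGraph) (t : Finset ℕ) : Prop :=
  t.Nonempty ∧ t ⊆ G.verts ∧ VConn G t

/-- A connected (nonempty) graph: the universal tube is a tube. -/
def IsConnGraph (G : FinGraph) : Prop := IsTube G G.verts

/-- Two vertex sets are far apart: disjoint and with no edge between them. -/
def FarApart (G : FinGraph) (a b : Finset ℕ) : Prop :=
  Disjoint a b ∧ ¬ ∃ v ∈ a, ∃ w ∈ b, G.Adj v w

/-- Compatible tubes: nested or far apart. -/
def Compatible (G : FinGraph) (a b : Finset ℕ) : Prop :=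
  a ⊆ b ∨ b ⊆ a ∨ FarApart G a b

/-- Linked tubes: disjoint and joined by an edge. -/
def Linked (G : FinGraph) (a b : Finset ℕ) : Prop :=
  Disjoint a b ∧ ∃ v ∈ a, ∃ w ∈ b, G.Adj v w

/-- A tubing of a connected graph: pairwise compatible tubes containing the universal tube. -/
def IsTubing (G : FinGraph) (T : Finset (Finset ℕ)) : Prop :=
  G.verts ∈ T ∧ (∀ t ∈ T, IsTube G t) ∧
    ∀ t ∈ T, ∀ t' ∈ T, t ≠ t' → Compatible G t t'

/-- Induced subgraph on a set of vertices. -/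
def induce (G : FinGraph) (t : Finset ℕ) : FinGraph where
  verts := t
  Adj v w := v ∈ t ∧ w ∈ t ∧ G.Adj v w
  symm := fun v w h => ⟨h.2.1, h.1, G.symm v w h.2.2⟩
  loopless := fun v h => G.loopless v h.2.2
  support := fun _ _ h => ⟨h.1, h.2.1⟩

/-- Simultaneous reconnected complement with respect to a family `F` of tubes
(for a single tube, or a family of pairwise far apart tubes, this is the (iterated)
reconnected complement). -/
def reconnAll (G : FinGraph) (F : Finset (Finset ℕ)) : FinGraph where
  verts := G.verts \ F.biUnion id
  Adj v w := v ≠ w ∧ v ∈ G.verts \ F.biUnion id ∧ w ∈ G.verts \ F.biUnion id ∧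
    (G.Adj v w ∨ ∃ f ∈ F, (∃ u ∈ f, G.Adj v u) ∧ ∃ u' ∈ f, G.Adj w u')
  symm := by
    rintro v w ⟨hne, hv, hw, h⟩
    refine ⟨hne.symm, hw, hv, ?_⟩
    rcases h with h | ⟨f, hf, h1, h2⟩
    · exact Or.inl (G.symm _ _ h)
    · exact Or.inr ⟨f, hf, h2, h1⟩
  loopless := fun v h => h.1 rfl
  support := fun _ _ h => ⟨h.2.1, h.2.2.1⟩

/-- Reconnected complement `Γ_t^*` of a graph with respect to a tube. -/
def reconn (G : FinGraph) (t : Finset ℕ) : FinGraph := reconnAll G {t}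

/-- The proper tubes of a tubing. -/
def properTubes (G : FinGraph) (T : Finset (Finset ℕ)) : Finset (Finset ℕ) :=
  T.filter (fun s => s ≠ G.verts)

/-- The maximal proper tubes of a tubing. -/
def MaxtP (G : FinGraph) (T : Finset (Finset ℕ)) : Finset (Finset ℕ) :=
  (properTubes G T).filter (fun s => ∀ s' ∈ properTubes G T, s ⊆ s' → s = s')

/-- The iterated reconnected complement `Γ_T^*` with respect to the maximal proper tubes. -/
def gammaStar (G : FinGraph) (T : Finset (Finset ℕ)) : FinGraph :=
  reconnAll G (MaxtP G T)

/-- Restriction `T|_t` of a tubing to a tube. -/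
def restrictT (T : Finset (Finset ℕ)) (t : Finset ℕ) : Finset (Finset ℕ) :=
  T.filter (fun s => s ⊆ t)

/-- For a tube `s` of `Γ_T^*`, the tube `s̃` of `Γ`: the union of `s` with all maximal
proper tubes of `T` linked to `s`. -/
def tildeT (G : FinGraph) (T : Finset (Finset ℕ)) (s : Finset ℕ) : Finset ℕ :=
  s ∪ ((MaxtP G T).filter (fun m => Linked G m s)).biUnion id

/-- Substitution `T •_Γ S` of a tubing `S` of `Γ_T^*` into the tubing `T`. -/
def substT (G : FinGraph) (T S : Finset (Finset ℕ)) : Finset (Finset ℕ) :=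
  T ∪ S.image (tildeT G T)

/-- The `t`-substitution `γ_t(T;S) = T ∪ (T|_t •_{Γ_t} S)`. -/
def gammaSub (G : FinGraph) (T : Finset (Finset ℕ)) (t : Finset ℕ)
    (S : Finset (Finset ℕ)) : Finset (Finset ℕ) :=
  T ∪ substT (induce G t) (restrictT T t) S

/-- The tubing `T_t^*` induced on the reconnected complement `Γ_t^*`. -/
def indStar (T : Finset (Finset ℕ)) (t : Finset ℕ) : Finset (Finset ℕ) :=
  T.filter (fun s => Disjoint s t) ∪ (T.filter (fun s => t ⊂ s)).image (fun s => s \ t)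

/-- The operation `T ◇ S` of Definition 2.4(2). -/
def diamond (G : FinGraph) (T : Finset (Finset ℕ)) (t : Finset ℕ)
    (S : Finset (Finset ℕ)) : Finset (Finset ℕ) :=
  T ∪ S.filter (fun s => ¬ Linked G s t) ∪
    (S.filter (fun s => Linked G s t)).image (fun s => s ∪ t)

/-- The tubes of `T`, viewed as subsets of the subtype of vertices. -/
def tubeSets (G : FinGraph) (T : Finset (Finset ℕ)) : Set (Set {x // x ∈ G.verts}) :=
  {U | ∃ t ∈ T, U = {x : {x // x ∈ G.verts} | (x : ℕ) ∈ t}}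

/-- The topology on the vertex set generated by the tubes of `T`. -/
def tubingTop (G : FinGraph) (T : Finset (Finset ℕ)) :
    TopologicalSpace {x // x ∈ G.verts} :=
  TopologicalSpace.generateFrom (tubeSets G T)

/-- One-line notation of the permutation `σ_t`: the vertices of `t` in increasing order
followed by the remaining vertices in increasing order. -/
def sigmaList (X t : Finset ℕ) : List ℕ :=
  t.sort (· ≤ ·) ++ (X \ t).sort (· ≤ ·)

/-- Number of `Γ`-inversions of a permutation given by its one-line notation `l`:
pairs of positions `p < q` carrying values `a > b` which form an edge of `Γ`. -/
def invCount (G : FinGraph) (l : List ℕ) : ℕ :=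
  ((Finset.range l.length ×ˢ Finset.range l.length).filter
    (fun pq => pq.1 < pq.2 ∧ l.getD pq.2 0 < l.getD pq.1 0 ∧
      G.Adj (l.getD pq.1 0) (l.getD pq.2 0))).card

/-- The signature `sgn^Γ(σ) = (-1)^{inv_Γ(σ)}`. -/
def graphSgn (G : FinGraph) (l : List ℕ) : ℤ := (-1) ^ invCount G l

/-- Rank (1-based) of `v` inside a finite set `X` of naturals: the order-preserving
relabelling of `X` by `{1,…,|X|}`. -/
def rk (X : Finset ℕ) (v : ℕ) : ℕ := (X.filter (fun u => u ≤ v)).card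

/-- Order-preserving relabelling of a graph by the initial segment `{1,…,n}`. -/
def relabelG (G : FinGraph) : FinGraph where
  verts := G.verts.image (rk G.verts)
  Adj i j := i ≠ j ∧ ∃ v w, G.Adj v w ∧ i = rk G.verts v ∧ j = rk G.verts w
  symm := by
    rintro i j ⟨hne, v, w, h, hi, hj⟩
    exact ⟨hne.symm, w, v, G.symm _ _ h, hj, hi⟩
  loopless := fun _ h => h.1 rfl
  support := by
    rintro i j ⟨hne, v, w, h, hi, hj⟩
    exact ⟨Finset.mem_image.mpr ⟨v, (G.support _ _ h).1, hi.symm⟩,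
      Finset.mem_image.mpr ⟨w, (G.support _ _ h).2, hj.symm⟩⟩

/-- Order-preserving relabelling of a subset of `X`. -/
def relabelF (X t : Finset ℕ) : Finset ℕ := t.image (rk X)

/-- Order-preserving relabelling of a family of subsets of `X`. -/
def relabelT (X : Finset ℕ) (T : Finset (Finset ℕ)) : Finset (Finset ℕ) :=
  T.image (relabelF X)

/-- Connected components (in `G`) of a set of vertices. -/
def comps (G : FinGraph) (s : Finset ℕ) : Finset (Finset ℕ) :=
  s.image (fun v => s.filter (fun w =>
    Relation.ReflTransGen (fun a b => a ∈ s ∧ b ∈ s ∧ G.Adj a b) v w))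

/-- The restriction map `res_Ω^Γ` on tubings: replace each tube by its connected
components in `Ω`. -/
def resT (Om : FinGraph) (T : Finset (Finset ℕ)) : Finset (Finset ℕ) :=
  T.biUnion (comps Om)

/-- Shift of a vertex set by `n`. -/
def shiftF (n : ℕ) (s : Finset ℕ) : Finset ℕ := s.image (fun v => v + n)

/-- Shift of a family of vertex sets by `n`. -/
def shiftT (n : ℕ) (S : Finset (Finset ℕ)) : Finset (Finset ℕ) := S.image (shiftF n)

/-- Shift of a graph by `n`. -/
def shiftG (n : ℕ) (G : FinGraph) : FinGraph where
  verts := shiftF n G.verts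
  Adj v w := ∃ a b, G.Adj a b ∧ v = a + n ∧ w = b + n
  symm := by
    rintro v w ⟨a, b, h, rfl, rfl⟩
    exact ⟨b, a, G.symm _ _ h, rfl, rfl⟩
  loopless := by
    rintro v ⟨a, b, h, ha, hb⟩
    have : a = b := by omega
    exact G.loopless b (this ▸ h)
  support := by
    rintro v w ⟨a, b, h, rfl, rfl⟩
    exact ⟨Finset.mem_image.mpr ⟨a, (G.support _ _ h).1, rfl⟩,
      Finset.mem_image.mpr ⟨b, (G.support _ _ h).2, rfl⟩⟩

/-- `X_T` : the vertices belonging to no proper tube of `T`. -/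
def freeVerts (G : FinGraph) (T : Finset (Finset ℕ)) : Finset ℕ :=
  G.verts.filter (fun v => ∀ s ∈ T, s ≠ G.verts → v ∉ s)

/-- The endpoint `max X_T` of the joining edge. -/
def joinA (G : FinGraph) (T : Finset (Finset ℕ)) : ℕ :=
  WithBot.unbotD 0 (freeVerts G T).max

/-- The endpoint `n + min X_S` of the joining edge. -/
def joinB (Om : FinGraph) (S : Finset (Finset ℕ)) (n : ℕ) : ℕ :=
  n + WithTop.untopD 0 (freeVerts Om S).min

/-- Vertex set of the joined graph `Γ ∪_{T,S} Ω`. -/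
def joinVerts (G Om : FinGraph) (n : ℕ) : Finset ℕ := G.verts ∪ shiftF n Om.verts

/-- The joined graph `Γ ∪_{T,S} Ω`: the disjoint union (with `Ω` shifted by `n`)
plus one edge from `max X_T` to `n + min X_S`. -/
def joinG (G Om : FinGraph) (T S : Finset (Finset ℕ)) (n : ℕ) : FinGraph where
  verts := joinVerts G Om n
  Adj v w := G.Adj v w ∨ (shiftG n Om).Adj v w ∨
    (v ≠ w ∧ v ∈ joinVerts G Om n ∧ w ∈ joinVerts G Om n ∧
      ((v = joinA G T ∧ w = joinB Om S n) ∨ (w = joinA G T ∧ v = joinB Om S n)))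
  symm := by
    rintro v w (h | h | ⟨hne, hv, hw, hc⟩)
    · exact Or.inl (G.symm _ _ h)
    · exact Or.inr (Or.inl ((shiftG n Om).symm _ _ h))
    · exact Or.inr (Or.inr ⟨hne.symm, hw, hv, hc.symm⟩)
  loopless := by
    rintro v (h | h | ⟨hne, _⟩)
    · exact G.loopless v h
    · exact (shiftG n Om).loopless v h
    · exact hne rfl
  support := by
    rintro v w (h | h | ⟨_, hv, hw, _⟩)
    · exact ⟨Finset.mem_union_left _ (G.support _ _ h).1,
        Finset.mem_union_left _ (G.support _ _ h).2⟩
    · exact ⟨Finset.mem_union_right _ ((shiftG n Om).support _ _ h).1,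
        Finset.mem_union_right _ ((shiftG n Om).support _ _ h).2⟩
    · exact ⟨hv, hw⟩

/-- `T ▷ S`. -/
def trR (G Om : FinGraph) (T S : Finset (Finset ℕ)) (n : ℕ) : Finset (Finset ℕ) :=
  T ∪ shiftT n (properTubes Om S) ∪ {joinVerts G Om n}

/-- `T ◁ S`. -/
def trL (G Om : FinGraph) (T S : Finset (Finset ℕ)) (n : ℕ) : Finset (Finset ℕ) :=
  properTubes G T ∪ shiftT n S ∪ {joinVerts G Om n}

/-- `T ⊥ S`. -/
def tPerp (G Om : FinGraph) (T S : Finset (Finset ℕ)) (n : ℕ) : Finset (Finset ℕ) :=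
  properTubes G T ∪ shiftT n (properTubes Om S) ∪ {joinVerts G Om n}

/-- Equality of graphs: same vertex set and same edges. -/
def GEq (A B : FinGraph) : Prop :=
  A.verts = B.verts ∧ ∀ v w, A.Adj v w ↔ B.Adj v w

/-- Index type for the basis of `Tub⁺`: `none` is the unit `1`, `some (Γ,T)` is a pair. -/
abbrev TubIdx : Type := Option (FinGraph × Finset (Finset ℕ))

/-- A pair `(Γ,T)` relabelled order-preservingly to standard vertex set, identified
with the unit `1` when the vertex set is empty. -/
def embPair (G : FinGraph) (T : Finset (Finset ℕ)) : TubIdx :=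
  if G.verts = ∅ then none else some (relabelG G, relabelT G.verts T)

/-- The value of the pre-Lie coproduct `Δ_•` on a basis element. -/
def deltaFun (K : Type) [CommRing K] (i : TubIdx) :
    (TubIdx →₀ K) ⊗[K] (TubIdx →₀ K) :=
  match i with
  | none => Finsupp.single (none : TubIdx) (1 : K) ⊗ₜ[K] Finsupp.single (none : TubIdx) (1 : K)
  | some (G, T) =>
      (∑ t ∈ T, (Finsupp.single (embPair (induce G t) (restrictT T t)) (1 : K)) ⊗ₜ[K]
        (Finsupp.single (embPair (reconn G t) (indStar T t)) (1 : K)))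
      + (Finsupp.single (none : TubIdx) (1 : K)) ⊗ₜ[K]
          (Finsupp.single (some (G, T) : TubIdx) (1 : K))

/-- The pre-Lie coproduct `Δ_•` on `Tub⁺`, the free module on `TubIdx`. -/
def delta (K : Type) [CommRing K] :
    (TubIdx →₀ K) →ₗ[K] (TubIdx →₀ K) ⊗[K] (TubIdx →₀ K) :=
  Finsupp.lift ((TubIdx →₀ K) ⊗[K] (TubIdx →₀ K)) K TubIdx (deltaFun K)

end CDTub

namespace CDTub

def rel' (G : FinGraph) (s : Finset ℕ) (a b : ℕ) : Prop := a ∈ s ∧ b ∈ s ∧ G.Adj a b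

abbrev RTG (G : FinGraph) (s : Finset ℕ) := Relation.ReflTransGen (rel' G s)

def CC (G : FinGraph) (s : Finset ℕ) (v : ℕ) : Finset ℕ :=
  s.filter (fun w => RTG G s v w)

lemma rel'_symm (G : FinGraph) (s : Finset ℕ) : Symmetric (rel' G s) :=
  fun _ _ h => ⟨h.2.1, h.1, G.symm _ _ h.2.2⟩

lemma rtg_symm (G : FinGraph) (s : Finset ℕ) {a b : ℕ} (h : RTG G s a b) : RTG G s b a :=
  by haveI : Std.Symm (rel' G s) := ⟨fun a b h => rel'_symm G s h⟩; exact Relation.ReflTransGen.symmetric.symm _ _ h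

lemma mem_CC {G : FinGraph} {s : Finset ℕ} {v w : ℕ} :
    w ∈ CC G s v ↔ w ∈ s ∧ RTG G s v w := Finset.mem_filter

lemma CC_subset (G : FinGraph) (s : Finset ℕ) (v : ℕ) : CC G s v ⊆ s :=
  Finset.filter_subset _ _

lemma mem_CC_self {G : FinGraph} {s : Finset ℕ} {v : ℕ} (hv : v ∈ s) : v ∈ CC G s v :=
  mem_CC.2 ⟨hv, Relation.ReflTransGen.refl⟩

lemma CC_eq_of_rtg {G : FinGraph} {s : Finset ℕ} {v w : ℕ} (h : RTG G s v w) :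
    CC G s v = CC G s w := by
  ext x
  simp only [mem_CC]
  exact ⟨fun ⟨hx, hr⟩ => ⟨hx, (rtg_symm G s h).trans hr⟩, fun ⟨hx, hr⟩ => ⟨hx, h.trans hr⟩⟩

lemma rtg_mono {G G' : FinGraph} {s s' : Finset ℕ} (hs : s ⊆ s')
    (hAdj : ∀ a b, G.Adj a b → G'.Adj a b) {v w : ℕ} (h : RTG G s v w) : RTG G' s' v w :=
  Relation.ReflTransGen.mono (r := rel' G s) (p := rel' G' s')
    (by intro _ _ hab; exact ⟨hs hab.1, hs hab.2.1, hAdj _ _ hab.2.2⟩) v w h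

lemma mem_comps_iff {G : FinGraph} {s : Finset ℕ} {c : Finset ℕ} :
    c ∈ comps G s ↔ ∃ v ∈ s, c = CC G s v := by
  simp only [comps, Finset.mem_image, CC, RTG, rel']
  exact ⟨fun ⟨v, hv, h⟩ => ⟨v, hv, h.symm⟩, fun ⟨v, hv, h⟩ => ⟨v, hv, h.symm⟩⟩

lemma CC_mem_comps {G : FinGraph} {s : Finset ℕ} {v : ℕ} (hv : v ∈ s) :
    CC G s v ∈ comps G s := mem_comps_iff.2 ⟨v, hv, rfl⟩

lemma comps_nonempty {G : FinGraph} {s c : Finset ℕ} (hc : c ∈ comps G s) : c.Nonempty := by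
  obtain ⟨v, hv, rfl⟩ := mem_comps_iff.1 hc
  exact ⟨v, mem_CC_self hv⟩

/-- a walk from `v` stays inside the component of `v`. -/
lemma rtg_in_CC {G : FinGraph} {s : Finset ℕ} {v w : ℕ} (hv : v ∈ s) (h : RTG G s v w) :
    RTG G (CC G s v) v w := by
  induction h with
  | refl => exact Relation.ReflTransGen.refl
  | tail hab step ih =>
      rename_i b c
      have hb : b ∈ CC G s v := mem_CC.2 ⟨step.1, hab⟩
      have hc : c ∈ CC G s v := mem_CC.2 ⟨step.2.1, hab.tail step⟩
      exact ih.tail ⟨hb, hc, step.2.2⟩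

/-- Components are connected. -/
lemma CC_conn {G : FinGraph} {s : Finset ℕ} {v : ℕ} (hv : v ∈ s) :
    ∀ a ∈ CC G s v, ∀ b ∈ CC G s v, RTG G (CC G s v) a b := by
  intro a ha b hb
  have hva : RTG G (CC G s v) v a := rtg_in_CC hv (mem_CC.1 ha).2
  have hvb : RTG G (CC G s v) v b := rtg_in_CC hv (mem_CC.1 hb).2
  exact (rtg_symm G _ hva).trans hvb

/-- A connected subset meeting a component is contained in it. -/
lemma subset_CC_of_conn {G : FinGraph} {s u : Finset ℕ} {v x : ℕ} (hu : u ⊆ s)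
    (hconn : ∀ a ∈ u, ∀ b ∈ u, RTG G u a b) (hx : x ∈ u) (hxc : x ∈ CC G s v) :
    u ⊆ CC G s v := by
  intro y hy
  have h1 : RTG G s x y := rtg_mono hu (fun _ _ h => h) (hconn x hx y hy)
  exact mem_CC.2 ⟨hu hy, (mem_CC.1 hxc).2.trans h1⟩

lemma comps_of_vconn {G : FinGraph} {s c : Finset ℕ} (h : VConn G s) (hc : c ∈ comps G s) :
    c = s := by
  obtain ⟨v, hv, rfl⟩ := mem_comps_iff.1 hc
  apply Finset.Subset.antisymm (CC_subset G s v)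
  intro w hw
  exact mem_CC.2 ⟨hw, h v hv w hw⟩


/-! ### Tubing lemmas -/


lemma mem_MaxtP {G : FinGraph} {T : Finset (Finset ℕ)} {m : Finset ℕ} :
    m ∈ MaxtP G T ↔ (m ∈ T ∧ m ≠ G.verts) ∧ ∀ s' ∈ properTubes G T, m ⊆ s' → m = s' := by
  simp [MaxtP, properTubes, Finset.mem_filter, and_assoc]

lemma mem_properTubes {G : FinGraph} {T : Finset (Finset ℕ)} {m : Finset ℕ} :
    m ∈ properTubes G T ↔ m ∈ T ∧ m ≠ G.verts := Finset.mem_filter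

lemma maxt_subset_T {G : FinGraph} {T : Finset (Finset ℕ)} : MaxtP G T ⊆ T :=
  fun _ h => (mem_MaxtP.1 h).1.1

lemma exists_maxt {G : FinGraph} {T : Finset (Finset ℕ)} {t : Finset ℕ}
    (ht : t ∈ properTubes G T) : ∃ m ∈ MaxtP G T, t ⊆ m := by
  set F := (properTubes G T).filter (fun s => t ⊆ s) with hF
  have hne : F.Nonempty := ⟨t, Finset.mem_filter.2 ⟨ht, Finset.Subset.refl t⟩⟩
  obtain ⟨m, hmF, hmax⟩ := Finset.exists_maximal hne
  have hm := Finset.mem_filter.1 hmF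
  refine ⟨m, mem_MaxtP.2 ⟨⟨(mem_properTubes.1 hm.1).1, (mem_properTubes.1 hm.1).2, ⟩, ?_⟩, hm.2⟩
  intro s' hs' hsub
  by_contra hne'
  exact hne' (Finset.Subset.antisymm hsub (hmax (Finset.mem_filter.2 ⟨hs', hm.2.trans hsub⟩) hsub))

lemma maxt_farApart {G : FinGraph} {T : Finset (Finset ℕ)} (hT : IsTubing G T)
    {m m' : Finset ℕ} (hm : m ∈ MaxtP G T) (hm' : m' ∈ MaxtP G T) (hne : m ≠ m') :
    FarApart G m m' := by
  obtain ⟨⟨hmT, hmv⟩, hmax⟩ := mem_MaxtP.1 hm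
  obtain ⟨⟨hmT', hmv'⟩, hmax'⟩ := mem_MaxtP.1 hm'
  rcases hT.2.2 m hmT m' hmT' hne with h | h | h
  · exact absurd (hmax m' (mem_properTubes.2 ⟨hmT', hmv'⟩) h) hne
  · exact absurd (hmax' m (mem_properTubes.2 ⟨hmT, hmv⟩) h).symm hne
  · exact h

lemma mem_resT {Om : FinGraph} {T : Finset (Finset ℕ)} {c : Finset ℕ} :
    c ∈ resT Om T ↔ ∃ t ∈ T, c ∈ comps Om t := Finset.mem_biUnion

section Main

variable {G Om : FinGraph} {T : Finset (Finset ℕ)}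

/-- a component of a proper tube is not the full vertex set -/
lemma comp_ne_verts (hV : Om.verts = G.verts) {t c : Finset ℕ} (htv : t ⊆ G.verts)
    (htne : t ≠ G.verts) (hc : c ∈ comps Om t) : c ≠ Om.verts := by
  obtain ⟨v, hv, rfl⟩ := mem_comps_iff.1 hc
  intro h
  apply htne
  apply Finset.Subset.antisymm htv
  rw [← hV, ← h]
  exact CC_subset Om t v

/-- components of maximal proper tubes are maximal proper tubes of the restriction -/
lemma lemA1 (hOmc : IsConnGraph Om) (hV : Om.verts = G.verts) (hT : IsTubing G T)
    {m f : Finset ℕ} (hm : m ∈ MaxtP G T) (hf : f ∈ comps Om m) :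
    f ∈ MaxtP Om (resT Om T) := by
  obtain ⟨⟨hmT, hmv⟩, hmax⟩ := mem_MaxtP.1 hm
  have hmtube := hT.2.1 m hmT
  have hfres : f ∈ resT Om T := mem_resT.2 ⟨m, hmT, hf⟩
  have hfne : f ≠ Om.verts := comp_ne_verts hV hmtube.2.1 hmv hf
  refine mem_MaxtP.2 ⟨⟨hfres, hfne⟩, ?_⟩
  intro f' hf' hsub
  obtain ⟨hf'res, hf'ne⟩ := mem_properTubes.1 hf'
  obtain ⟨t, htT, hf'c⟩ := mem_resT.1 hf'res
  -- t is proper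
  have htne : t ≠ G.verts := by
    rintro rfl
    apply hf'ne
    rw [hV]
    exact comps_of_vconn (show VConn Om G.verts from hV ▸ hOmc.2.2) hf'c
  obtain ⟨v, hv, rfl⟩ := mem_comps_iff.1 hf
  obtain ⟨v', hv', rfl⟩ := mem_comps_iff.1 hf'c
  have hvf : v ∈ CC Om t v' := hsub (mem_CC_self hv)
  by_cases hmt : m = t
  · subst hmt
    exact (CC_eq_of_rtg (mem_CC.1 hvf).2).symm
  · rcases hT.2.2 m hmT t htT hmt with h | h | h
    · exact absurd (hmax t (mem_properTubes.2 ⟨htT, htne⟩) h) hmt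
    · -- t ⊆ m : CC Om t v' is connected, contained in m, meets CC Om m v
      have : CC Om t v' ⊆ CC Om m v :=
        subset_CC_of_conn ((CC_subset Om t v').trans h) (CC_conn hv') hvf
          (mem_CC_self hv)
      exact Finset.Subset.antisymm hsub this
    · exact (Finset.disjoint_left.1 h.1 hv (CC_subset Om t v' hvf)).elim

lemma lemA2 (hOmc : IsConnGraph Om) (hV : Om.verts = G.verts) (hT : IsTubing G T)
    {f : Finset ℕ} (hf : f ∈ MaxtP Om (resT Om T)) :
    ∃ m ∈ MaxtP G T, f ∈ comps Om m := by
  obtain ⟨⟨hfres, hfne⟩, hmax⟩ := mem_MaxtP.1 hf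
  obtain ⟨t, htT, hfc⟩ := mem_resT.1 hfres
  have htne : t ≠ G.verts := by
    rintro rfl
    apply hfne
    rw [hV]
    exact comps_of_vconn (show VConn Om G.verts from hV ▸ hOmc.2.2) hfc
  obtain ⟨m, hm, htm⟩ := exists_maxt (mem_properTubes.2 ⟨htT, htne⟩)
  obtain ⟨v, hv, rfl⟩ := mem_comps_iff.1 hfc
  have hvm : v ∈ m := htm hv
  have hsub : CC Om t v ⊆ CC Om m v :=
    subset_CC_of_conn ((CC_subset Om t v).trans htm) (CC_conn hv) (mem_CC_self hv)
      (mem_CC_self hvm)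
  have hCCm : CC Om m v ∈ comps Om m := CC_mem_comps hvm
  obtain ⟨⟨hmT, hmv⟩, _⟩ := mem_MaxtP.1 hm
  have hproper : CC Om m v ∈ properTubes Om (resT Om T) :=
    mem_properTubes.2 ⟨mem_resT.2 ⟨m, hmT, hCCm⟩,
      comp_ne_verts hV (hT.2.1 m hmT).2.1 hmv hCCm⟩
  have := hmax _ hproper hsub
  exact ⟨m, hm, this ▸ hCCm⟩

lemma unions_eq (hOmc : IsConnGraph Om) (hV : Om.verts = G.verts) (hT : IsTubing G T) :
    (MaxtP Om (resT Om T)).biUnion id = (MaxtP G T).biUnion id := by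
  apply Finset.Subset.antisymm
  · intro x hx
    obtain ⟨f, hf, hxf⟩ := Finset.mem_biUnion.1 hx
    obtain ⟨m, hm, hfc⟩ := lemA2 hOmc hV hT hf
    obtain ⟨v, hv, rfl⟩ := mem_comps_iff.1 hfc
    exact Finset.mem_biUnion.2 ⟨m, hm, CC_subset Om m v hxf⟩
  · intro x hx
    obtain ⟨m, hm, hxm⟩ := Finset.mem_biUnion.1 hx
    exact Finset.mem_biUnion.2 ⟨CC Om m x, lemA1 hOmc hV hT hm (CC_mem_comps hxm),
      mem_CC_self hxm⟩

end Main



lemma comps_subset {G : FinGraph} {s c : Finset ℕ} (hc : c ∈ comps G s) : c ⊆ s := by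
  obtain ⟨v, hv, rfl⟩ := mem_comps_iff.1 hc; exact CC_subset G s v

lemma comps_conn {G : FinGraph} {s c : Finset ℕ} (hc : c ∈ comps G s) :
    ∀ a ∈ c, ∀ b ∈ c, RTG G c a b := by
  obtain ⟨v, hv, rfl⟩ := mem_comps_iff.1 hc; exact CC_conn hv

lemma comps_closed {G : FinGraph} {s c : Finset ℕ} (hc : c ∈ comps G s) {b y : ℕ}
    (hb : b ∈ c) (hy : y ∈ s) (hadj : G.Adj b y) : y ∈ c := by
  obtain ⟨v, hv, rfl⟩ := mem_comps_iff.1 hc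
  obtain ⟨hbs, hr⟩ := mem_CC.1 hb
  exact mem_CC.2 ⟨hy, hr.tail ⟨hbs, hy, hadj⟩⟩

lemma mem_tildeT {G : FinGraph} {T : Finset (Finset ℕ)} {s : Finset ℕ} {x : ℕ} :
    x ∈ tildeT G T s ↔ x ∈ s ∨ ∃ m ∈ MaxtP G T, Linked G m s ∧ x ∈ m := by
  simp only [tildeT, Finset.mem_union, Finset.mem_biUnion, Finset.mem_filter, id]
  tauto

section Main2

variable {G Om : FinGraph} {T S : Finset (Finset ℕ)} {s : Finset ℕ}

variable (hOmc : IsConnGraph Om) (hV : Om.verts = G.verts)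
  (hE : ∀ v w, Om.Adj v w → G.Adj v w) (hT : IsTubing G T)
  (hss : s ⊆ (gammaStar G T).verts)

lemma verts_eq (hOmc : IsConnGraph Om) (hV : Om.verts = G.verts) (hT : IsTubing G T) :
    (gammaStar Om (resT Om T)).verts = (gammaStar G T).verts := by
  show Om.verts \ _ = G.verts \ _
  rw [hV, unions_eq hOmc hV hT]

include hss in
lemma not_mem_maxt {x : ℕ} (hxs : x ∈ s) {m : Finset ℕ} (hm : m ∈ MaxtP G T) : x ∉ m :=
  fun h => (Finset.mem_sdiff.1 (hss hxs)).2 (Finset.mem_biUnion.2 ⟨m, hm, h⟩)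

include hOmc hV hT hss in
lemma mem_OmS_verts {x : ℕ} (hxs : x ∈ s) :
    x ∈ (gammaStar Om (resT Om T)).verts := by
  rw [verts_eq hOmc hV hT]; exact hss hxs

include hOmc hV hT hss in
lemma omS_adj_of_adj {a b : ℕ} (ha : a ∈ s) (hb : b ∈ s) (hadj : Om.Adj a b) :
    (gammaStar Om (resT Om T)).Adj a b := by
  refine ⟨fun h => Om.loopless b (h ▸ hadj), mem_OmS_verts hOmc hV hT hss ha,
    mem_OmS_verts hOmc hV hT hss hb, Or.inl hadj⟩

include hOmc hV hT hss in
lemma omS_adj_via {a b : ℕ} (ha : a ∈ s) (hb : b ∈ s) (hne : a ≠ b)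
    {f : Finset ℕ} (hf : f ∈ MaxtP Om (resT Om T))
    {u u' : ℕ} (hu : u ∈ f) (hu' : u' ∈ f) (hau : Om.Adj a u) (hbu : Om.Adj b u') :
    (gammaStar Om (resT Om T)).Adj a b :=
  ⟨hne, mem_OmS_verts hOmc hV hT hss ha, mem_OmS_verts hOmc hV hT hss hb,
    Or.inr ⟨f, hf, ⟨u, hu, hau⟩, ⟨u', hu', hbu⟩⟩⟩

include hOmc hV hE hT hss in
/-- A Ω*-walk within `s` gives an Ω-walk within `s̃`. -/
lemma rtg_tilde_of_star {a b : ℕ}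
    (h : RTG (gammaStar Om (resT Om T)) s a b) : RTG Om (tildeT G T s) a b := by
  induction h with
  | refl => exact Relation.ReflTransGen.refl
  | tail hab step ih =>
      rename_i b c
      obtain ⟨hbs, hcs, hne, _, _, hor⟩ := step
      have hbt : b ∈ tildeT G T s := mem_tildeT.2 (Or.inl hbs)
      have hct : c ∈ tildeT G T s := mem_tildeT.2 (Or.inl hcs)
      rcases hor with h | ⟨f, hfMh, ⟨u, huf, hbu⟩, ⟨u', hu'f, hcu'⟩⟩
      · exact ih.tail ⟨hbt, hct, h⟩
      · obtain ⟨m, hm, hfc⟩ := lemA2 hOmc hV hT hfMh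
        have hfm : f ⊆ m := comps_subset hfc
        have hlk : Linked G m s := by
          refine ⟨Finset.disjoint_left.2 (fun {x} hx hxs => not_mem_maxt hss hxs hm hx), ?_⟩
          exact ⟨u, hfm huf, b, hbs, G.symm _ _ (hE _ _ hbu)⟩
        have hmt : m ⊆ tildeT G T s := fun x hx => mem_tildeT.2 (Or.inr ⟨m, hm, hlk, hx⟩)
        have hft : f ⊆ tildeT G T s := hfm.trans hmt
        have p1 : RTG Om (tildeT G T s) b u := Relation.ReflTransGen.single ⟨hbt, hft huf, hbu⟩
        have p2 : RTG Om (tildeT G T s) u u' :=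
          rtg_mono hft (fun _ _ h => h) (comps_conn hfc u huf u' hu'f)
        have p3 : RTG Om (tildeT G T s) u' c :=
          Relation.ReflTransGen.single ⟨hft hu'f, hct, Om.symm _ _ hcu'⟩
        exact ih.trans (p1.trans (p2.trans p3))

include hOmc hV hE hT hss in
/-- Structure of Ω-walks within `s̃` starting in `s`. -/
lemma tilde_rtg_struct {a x : ℕ} (ha : a ∈ s)
    (h : RTG Om (tildeT G T s) a x) :
    (x ∈ s ∧ RTG (gammaStar Om (resT Om T)) s a x) ∨
    (∃ m ∈ MaxtP G T, Linked G m s ∧ ∃ f ∈ comps Om m, x ∈ f ∧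
       ∃ w ∈ s, RTG (gammaStar Om (resT Om T)) s a w ∧ ∃ u ∈ f, Om.Adj w u) := by
  induction h with
  | refl => exact Or.inl ⟨ha, Relation.ReflTransGen.refl⟩
  | tail hab step ih =>
      rename_i b c
      obtain ⟨hbt, hct, hadj⟩ := step
      rcases ih with ⟨hbs, hr⟩ | ⟨m, hm, hlk, f, hfc, hbf, w, hws, hrw, u, huf, hwu⟩
      · by_cases hcs : c ∈ s
        · exact Or.inl ⟨hcs, hr.tail ⟨hbs, hcs,
            omS_adj_of_adj hOmc hV hT hss hbs hcs hadj⟩⟩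
        · obtain ⟨m, hm, hlk, hcm⟩ := (mem_tildeT.1 hct).resolve_left hcs
          exact Or.inr ⟨m, hm, hlk, CC Om m c, CC_mem_comps hcm, mem_CC_self hcm,
            b, hbs, hr, c, mem_CC_self hcm, hadj⟩
      · by_cases hcs : c ∈ s
        · refine Or.inl ⟨hcs, ?_⟩
          by_cases hwc : w = c
          · exact hwc ▸ hrw
          · exact hrw.tail ⟨hws, hcs, omS_adj_via hOmc hV hT hss hws hcs hwc
              (lemA1 hOmc hV hT hm hfc) huf hbf hwu (Om.symm _ _ hadj)⟩
        · obtain ⟨m', hm', hlk', hcm'⟩ := (mem_tildeT.1 hct).resolve_left hcs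
          have hmm : m' = m := by
            by_contra hne
            exact (maxt_farApart hT hm' hm (hne)).2
              ⟨c, hcm', b, comps_subset hfc hbf, G.symm _ _ (hE _ _ hadj)⟩
          subst hmm
          exact Or.inr ⟨m', hm', hlk, f, hfc, comps_closed hfc hbf hcm' hadj,
            w, hws, hrw, u, huf, hwu⟩

end Main2


section Main3

variable {G Om : FinGraph} {T S : Finset (Finset ℕ)} {s : Finset ℕ}

variable (hOmc : IsConnGraph Om) (hV : Om.verts = G.verts)
  (hE : ∀ v w, Om.Adj v w → G.Adj v w) (hT : IsTubing G T)
  (hss : s ⊆ (gammaStar G T).verts)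

include hOmc hV hE hT hss in
/-- A component of `s̃` not meeting `s` is a component of a maximal tube. -/
lemma case1 {c' : Finset ℕ} (hc' : c' ∈ comps Om (tildeT G T s))
    (hdis : ∀ a ∈ c', a ∉ s) : c' ∈ resT Om T := by
  obtain ⟨x, hx, rfl⟩ := mem_comps_iff.1 hc'
  have hxs : x ∉ s := hdis x (mem_CC_self hx)
  obtain ⟨m, hm, hlk, hxm⟩ := (mem_tildeT.1 hx).resolve_left hxs
  have hmt : m ⊆ tildeT G T s := fun z hz => mem_tildeT.2 (Or.inr ⟨m, hm, hlk, hz⟩)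
  -- the component of x in s̃ stays within m
  have key : ∀ y, RTG Om (tildeT G T s) x y → y ∈ m ∧ RTG Om m x y := by
    intro y hy
    induction hy with
    | refl => exact ⟨hxm, Relation.ReflTransGen.refl⟩
    | tail hab step ih =>
        rename_i b c
        obtain ⟨hbt, hct, hadj⟩ := step
        obtain ⟨hbm, hrb⟩ := ih
        have hcs : c ∉ s := hdis c (mem_CC.2 ⟨hct, hab.tail ⟨hbt, hct, hadj⟩⟩)
        obtain ⟨m', hm', hlk', hcm'⟩ := (mem_tildeT.1 hct).resolve_left hcs
        have hmm : m' = m := by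
          by_contra hne
          exact (maxt_farApart hT hm' hm hne).2 ⟨c, hcm', b, hbm, G.symm _ _ (hE _ _ hadj)⟩
        subst hmm
        exact ⟨hcm', hrb.tail ⟨hbm, hcm', hadj⟩⟩
  have : CC Om (tildeT G T s) x = CC Om m x := by
    apply Finset.Subset.antisymm
    · intro y hy
      obtain ⟨hyt, hry⟩ := mem_CC.1 hy
      exact mem_CC.2 ⟨(key y hry).1, (key y hry).2⟩
    · intro y hy
      obtain ⟨hym, hry⟩ := mem_CC.1 hy
      exact mem_CC.2 ⟨hmt hym, rtg_mono hmt (fun _ _ h => h) hry⟩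
  rw [this]
  exact mem_resT.2 ⟨m, maxt_subset_T hm, CC_mem_comps hxm⟩

include hOmc hV hE hT hss in
/-- A component of `s̃` meeting `s` at `a` is `tildeT` of the Ω*-component of `a`. -/
lemma case2 {a : ℕ} (ha : a ∈ s) :
    CC Om (tildeT G T s) a =
      tildeT Om (resT Om T) (CC (gammaStar Om (resT Om T)) s a) := by
  set c := CC (gammaStar Om (resT Om T)) s a with hc
  have hat : a ∈ tildeT G T s := mem_tildeT.2 (Or.inl ha)
  apply Finset.Subset.antisymm
  · intro y hy
    obtain ⟨hyt, hry⟩ := mem_CC.1 hy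
    rcases tilde_rtg_struct hOmc hV hE hT hss ha hry with ⟨hys, hr⟩ |
      ⟨m, hm, hlk, f, hfc, hyf, w, hws, hrw, u, huf, hwu⟩
    · exact mem_tildeT.2 (Or.inl (mem_CC.2 ⟨hys, hr⟩))
    · refine mem_tildeT.2 (Or.inr ⟨f, lemA1 hOmc hV hT hm hfc, ?_, hyf⟩)
      refine ⟨Finset.disjoint_left.2 (fun {z} hz hzc => not_mem_maxt hss
        (CC_subset _ _ _ hzc) hm (comps_subset hfc hz)), ?_⟩
      exact ⟨u, huf, w, mem_CC.2 ⟨hws, hrw⟩, Om.symm _ _ hwu⟩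
  · intro y hy
    have hcsub : c ⊆ CC Om (tildeT G T s) a := by
      intro z hz
      obtain ⟨hzs, hrz⟩ := mem_CC.1 hz
      exact mem_CC.2 ⟨mem_tildeT.2 (Or.inl hzs), rtg_tilde_of_star hOmc hV hE hT hss hrz⟩
    rcases mem_tildeT.1 hy with hyc | ⟨f, hf, hlkf, hyf⟩
    · exact hcsub hyc
    · -- f is a maximal piece Ω-linked to c
      obtain ⟨hdisf, v, hvf, w, hwc, hadj⟩ := hlkf
      obtain ⟨m, hm, hfc⟩ := lemA2 hOmc hV hT hf
      have hfm : f ⊆ m := comps_subset hfc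
      have hlk : Linked G m s := by
        refine ⟨Finset.disjoint_left.2 (fun {z} hz hzs => not_mem_maxt hss hzs hm hz), ?_⟩
        exact ⟨v, hfm hvf, w, CC_subset _ _ _ hwc, hE _ _ hadj⟩
      have hmt : m ⊆ tildeT G T s := fun z hz => mem_tildeT.2 (Or.inr ⟨m, hm, hlk, hz⟩)
      have hwa : w ∈ CC Om (tildeT G T s) a := hcsub hwc
      obtain ⟨hwt, hrw⟩ := mem_CC.1 hwa
      have hrv : RTG Om (tildeT G T s) a v :=
        hrw.tail ⟨hwt, hmt (hfm hvf), Om.symm _ _ hadj⟩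
      have hrvy : RTG Om (tildeT G T s) v y :=
        rtg_mono (hfm.trans hmt) (fun _ _ h => h) (comps_conn hfc v hvf y hyf)
      exact mem_CC.2 ⟨hmt (hfm hyf), hrv.trans hrvy⟩

include hOmc hV hE hT hss in
lemma lemL2 {c : Finset ℕ} (hc : c ∈ comps (gammaStar Om (resT Om T)) s) :
    tildeT Om (resT Om T) c ∈ comps Om (tildeT G T s) := by
  obtain ⟨v, hv, rfl⟩ := mem_comps_iff.1 hc
  rw [← case2 hOmc hV hE hT hss hv]
  exact CC_mem_comps (mem_tildeT.2 (Or.inl hv))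

include hOmc hV hE hT hss in
lemma lemL1 {c' : Finset ℕ} (hc' : c' ∈ comps Om (tildeT G T s)) :
    c' ∈ resT Om T ∨
      ∃ c ∈ comps (gammaStar Om (resT Om T)) s, c' = tildeT Om (resT Om T) c := by
  by_cases h : ∃ a ∈ c', a ∈ s
  · obtain ⟨a, hac, has⟩ := h
    obtain ⟨x, hx, rfl⟩ := mem_comps_iff.1 hc'
    have : CC Om (tildeT G T s) x = CC Om (tildeT G T s) a :=
      CC_eq_of_rtg (mem_CC.1 hac).2
    rw [this, case2 hOmc hV hE hT hss has]
    exact Or.inr ⟨CC (gammaStar Om (resT Om T)) s a, CC_mem_comps has, rfl⟩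
  · push_neg at h
    exact Or.inl (case1 hOmc hV hE hT hss hc' h)

end Main3


end CDTub

open CDTub in
/-- Restriction commutes with substitution: for `Ω ⊆ Γ` on the same vertex set,
`Γ_T^*` and `Ω_{T̂}^*` have the same vertices and `Edg(Ω_{T̂}^*) ⊆ Edg(Γ_T^*)`, and
`res_Ω^Γ(T •_Γ S) = T̂ •_Ω Ŝ`. -/
theorem res_subst (G Om : FinGraph) (hGc : IsConnGraph G) (hOmc : IsConnGraph Om)
    (hV : Om.verts = G.verts) (hE : ∀ v w, Om.Adj v w → G.Adj v w)
    (T : Finset (Finset ℕ)) (hT : IsTubing G T)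
    (S : Finset (Finset ℕ)) (hS : IsTubing (gammaStar G T) S) :
    ((gammaStar Om (resT Om T)).verts = (gammaStar G T).verts ∧
      ∀ v w, (gammaStar Om (resT Om T)).Adj v w → (gammaStar G T).Adj v w) ∧
    resT Om (substT G T S) =
      substT Om (resT Om T) (resT (gammaStar Om (resT Om T)) S) := by
  have hverts := verts_eq hOmc hV hT
  constructor
  · refine ⟨hverts, ?_⟩
    rintro v w ⟨hne, hv, hw, hor⟩
    refine ⟨hne, show v ∈ (gammaStar G T).verts from hverts ▸ hv,
      show w ∈ (gammaStar G T).verts from hverts ▸ hw, ?_⟩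
    rcases hor with h | ⟨f, hf, ⟨u, huf, hvu⟩, ⟨u', hu'f, hwu'⟩⟩
    · exact Or.inl (hE _ _ h)
    · obtain ⟨m, hm, hfc⟩ := lemA2 hOmc hV hT hf
      exact Or.inr ⟨m, hm, ⟨u, comps_subset hfc huf, hE _ _ hvu⟩,
        ⟨u', comps_subset hfc hu'f, hE _ _ hwu'⟩⟩
  · ext c
    constructor
    · intro hc
      obtain ⟨t, htm, hcc⟩ := Finset.mem_biUnion.1 hc
      rcases Finset.mem_union.1 htm with htT | htI
      · exact Finset.mem_union_left _ (mem_resT.2 ⟨t, htT, hcc⟩)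
      · obtain ⟨s0, hs0S, rfl⟩ := Finset.mem_image.1 htI
        have hss0 : s0 ⊆ (gammaStar G T).verts := (hS.2.1 s0 hs0S).2.1
        rcases lemL1 hOmc hV hE hT hss0 hcc with h | ⟨c0, hc0, rfl⟩
        · exact Finset.mem_union_left _ h
        · exact Finset.mem_union_right _ (Finset.mem_image.2 ⟨c0,
            Finset.mem_biUnion.2 ⟨s0, hs0S, hc0⟩, rfl⟩)
    · intro hc
      rcases Finset.mem_union.1 hc with h | h
      · obtain ⟨t, htT, hcc⟩ := mem_resT.1 h
        exact Finset.mem_biUnion.2 ⟨t, Finset.mem_union_left _ htT, hcc⟩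
      · obtain ⟨c0, hc0, rfl⟩ := Finset.mem_image.1 h
        obtain ⟨s0, hs0S, hc0c⟩ := Finset.mem_biUnion.1 hc0
        have hss0 : s0 ⊆ (gammaStar G T).verts := (hS.2.1 s0 hs0S).2.1
        exact Finset.mem_biUnion.2 ⟨tildeT G T s0,
          Finset.mem_union_right _ (Finset.mem_image.2 ⟨s0, hs0S, rfl⟩),
          lemL2 hOmc hV hE hT hss0 hc0c⟩
end
end

section
/- For finite connected simple graphs Γ (with n vertices) and Ω, and tubings T of Γ and S of Ω, the products induced on tubings of the joined graph satisfy: (T ▷ S)∖{t_∪} ⊇ T, the three families T ▷ S, T ◁ S and T ⊥ S are tubings of the connected graph Γ ∪_{T,S} Ω; in particular each of T ▷ S, T ◁ S, T ⊥ S is a family of pairwise compatible tubes of Γ ∪_{T,S} Ω containing its universal tube. -/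
open scoped Classical
open TensorProduct

noncomputable section

namespace CDTub

lemma mem_shiftF {n : ℕ} {s : Finset ℕ} {a : ℕ} : a + n ∈ shiftF n s ↔ a ∈ s := by
  simp only [shiftF, Finset.mem_image]
  constructor
  · rintro ⟨b, hb, h⟩
    have hba : b = a := by omega
    exact hba ▸ hb
  · exact fun h => ⟨a, h, rfl⟩

lemma shiftF_subset {n : ℕ} {s t : Finset ℕ} (h : s ⊆ t) : shiftF n s ⊆ shiftF n t :=
  Finset.image_subset_image h

lemma farApart_symm {G : FinGraph} {a b : Finset ℕ} (h : FarApart G a b) :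
    FarApart G b a :=
  ⟨h.1.symm, fun ⟨v, hv, w, hw, hadj⟩ => h.2 ⟨w, hw, v, hv, G.symm _ _ hadj⟩⟩

lemma unbot'_max_mem {s : Finset ℕ} (h : s.Nonempty) : WithBot.unbotD 0 s.max ∈ s := by
  obtain ⟨a, ha⟩ := Finset.max_of_nonempty h
  rw [ha, WithBot.unbotD_coe]
  exact Finset.mem_of_max ha

lemma untop'_min_mem {s : Finset ℕ} (h : s.Nonempty) : WithTop.untopD 0 s.min ∈ s := by
  obtain ⟨a, ha⟩ := Finset.min_of_nonempty h
  rw [ha, WithTop.untopD_coe]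
  exact Finset.mem_of_min ha

lemma freeVerts_nonempty (G : FinGraph) (T : Finset (Finset ℕ))
    (hGc : IsConnGraph G) (hT : IsTubing G T) : (freeVerts G T).Nonempty := by
  classical
  by_contra hemp
  rw [Finset.not_nonempty_iff_eq_empty] at hemp
  have hcov : ∀ v ∈ G.verts, ∃ s ∈ T, s ≠ G.verts ∧ v ∈ s := by
    intro v hv
    by_contra hc
    push_neg at hc
    have hvf : v ∈ freeVerts G T := by
      simp only [freeVerts, Finset.mem_filter]
      exact ⟨hv, fun s hs hne hvs => (hc s hs hne) hvs⟩
    rw [hemp] at hvf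
    exact absurd hvf (Finset.notMem_empty v)
  have hmax : ∀ v ∈ G.verts, ∃ mm ∈ T, mm ≠ G.verts ∧ v ∈ mm ∧
      ∀ s ∈ T, s ≠ G.verts → mm ⊆ s → mm = s := by
    intro v hv
    obtain ⟨s0, hs0T, hs0p, hvs0⟩ := hcov v hv
    obtain ⟨mm, hmm, hmmax⟩ := Finset.exists_maximal
      (s := T.filter fun s => s ≠ G.verts ∧ v ∈ s)
      ⟨s0, Finset.mem_filter.mpr ⟨hs0T, hs0p, hvs0⟩⟩
    replace hmm : mm ∈ T.filter fun s => s ≠ G.verts ∧ v ∈ s := hmm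
    rw [Finset.mem_filter] at hmm
    refine ⟨mm, hmm.1, hmm.2.1, hmm.2.2, fun s hs hsp hms => ?_⟩
    by_contra hne
    exact hne (Finset.Subset.antisymm hms
      (hmmax (Finset.mem_filter.mpr ⟨hs, hsp, hms hmm.2.2⟩) hms))
  obtain ⟨v0, hv0⟩ := hGc.1
  obtain ⟨m0, hm0T, hm0p, hv0m, hm0max⟩ := hmax v0 hv0
  have key : ∀ w, Relation.ReflTransGen
      (fun a b => a ∈ G.verts ∧ b ∈ G.verts ∧ G.Adj a b) v0 w → w ∈ m0 := by
    intro w hw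
    induction hw with
    | refl => exact hv0m
    | @tail b c _ hstep ih =>
      obtain ⟨hb, hc, hadj⟩ := hstep
      obtain ⟨m1, hm1T, hm1p, hcm1, hm1max⟩ := hmax c hc
      by_cases heq : m0 = m1
      · exact heq ▸ hcm1
      · rcases hT.2.2 m0 hm0T m1 hm1T heq with hsub | hsub | ⟨_, hnoedge⟩
        · exact absurd (hm0max m1 hm1T hm1p hsub) heq
        · exact absurd (hm1max m0 hm0T hm0p hsub).symm heq
        · exact absurd ⟨b, ih, c, hcm1, hadj⟩ hnoedge
  have hns : ¬ G.verts ⊆ m0 := fun hsub =>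
    hm0p (Finset.Subset.antisymm ((hT.2.1 m0 hm0T).2.1) hsub)
  obtain ⟨w, hwv, hwm⟩ := Finset.not_subset.mp hns
  exact hwm (key w (hGc.2.2 v0 hv0 w hwv))

end CDTub

open CDTub in
/-- `T ▷ S`, `T ◁ S` and `T ⊥ S` are tubings of the joined graph `Γ ∪_{T,S} Ω`, and
`(T ▷ S) ∖ {t_∪}` contains `T`. -/
theorem join_products_are_tubings (G Om : FinGraph) (n m : ℕ)
    (hG : G.verts = Finset.Icc 1 n) (hOm : Om.verts = Finset.Icc 1 m)
    (hGc : IsConnGraph G) (hOmc : IsConnGraph Om)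
    (T S : Finset (Finset ℕ)) (hT : IsTubing G T) (hS : IsTubing Om S) :
    T ⊆ (trR G Om T S n).erase (joinVerts G Om n) ∧
    IsTubing (joinG G Om T S n) (trR G Om T S n) ∧
    IsTubing (joinG G Om T S n) (trL G Om T S n) ∧
    IsTubing (joinG G Om T S n) (tPerp G Om T S n) := by
  classical
  obtain ⟨hTuniv, hTtube, hTcomp⟩ := hT
  obtain ⟨hSuniv, hStube, hScomp⟩ := hS
  have hn : 1 ≤ n := by
    obtain ⟨v, hv⟩ := hGc.1
    rw [hG, Finset.mem_Icc] at hv; omega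
  have hm : 1 ≤ m := by
    obtain ⟨v, hv⟩ := hOmc.1
    rw [hOm, Finset.mem_Icc] at hv; omega
  have hAfree : joinA G T ∈ freeVerts G T := unbot'_max_mem
    (freeVerts_nonempty G T hGc ⟨hTuniv, hTtube, hTcomp⟩)
  obtain ⟨b0, hb0min⟩ := Finset.min_of_nonempty
    (freeVerts_nonempty Om S hOmc ⟨hSuniv, hStube, hScomp⟩)
  have hBfree : b0 ∈ freeVerts Om S := Finset.mem_of_min hb0min
  have hJB : joinB Om S n = b0 + n := by
    show n + WithTop.untopD 0 (freeVerts Om S).min = b0 + n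
    rw [hb0min, WithTop.untopD_coe, Nat.add_comm]
  simp only [freeVerts, Finset.mem_filter] at hAfree hBfree
  have hGv : ∀ v ∈ G.verts, 1 ≤ v ∧ v ≤ n := by
    intro v hv; rw [hG, Finset.mem_Icc] at hv; exact hv
  have hOmv : ∀ v ∈ Om.verts, 1 ≤ v ∧ v ≤ m := by
    intro v hv; rw [hOm, Finset.mem_Icc] at hv; exact hv
  have hSv : ∀ v ∈ shiftF n Om.verts, n + 1 ≤ v ∧ v ≤ n + m := by
    intro v hv
    simp only [shiftF, Finset.mem_image] at hv
    obtain ⟨a, ha, rfl⟩ := hv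
    have := hOmv a ha
    omega
  have hAn : 1 ≤ joinA G T ∧ joinA G T ≤ n := hGv _ hAfree.1
  have hb0m : 1 ≤ b0 ∧ b0 ≤ m := hOmv _ hBfree.1
  have hsubV1 : G.verts ⊆ joinVerts G Om n := Finset.subset_union_left
  have hsubV2 : shiftF n Om.verts ⊆ joinVerts G Om n := Finset.subset_union_right
  have hBmemS : joinB Om S n ∈ shiftF n Om.verts := by
    rw [hJB]; exact mem_shiftF.mpr hBfree.1
  -- edge classification
  have hAdjG : ∀ v w, (joinG G Om T S n).Adj v w → v ∈ G.verts → w ∈ G.verts →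
      G.Adj v w := by
    intro v w hadj hv hw
    have hadj' : G.Adj v w ∨ (shiftG n Om).Adj v w ∨
        (v ≠ w ∧ v ∈ joinVerts G Om n ∧ w ∈ joinVerts G Om n ∧
          ((v = joinA G T ∧ w = joinB Om S n) ∨
            (w = joinA G T ∧ v = joinB Om S n))) := hadj
    rcases hadj' with h | h | ⟨_, _, _, hc⟩
    · exact h
    · exfalso
      have h' : ∃ a b, Om.Adj a b ∧ v = a + n ∧ w = b + n := h
      obtain ⟨a, b, hab, rfl, rfl⟩ := h'
      have ha := hOmv a (Om.support a b hab).1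
      have := (hGv _ hv).2
      omega
    · exfalso
      have h1 := (hGv v hv).2
      have h2 := (hGv w hw).2
      rcases hc with ⟨_, hwB⟩ | ⟨_, hvB⟩
      · rw [hJB] at hwB; omega
      · rw [hJB] at hvB; omega
  have hAdjS : ∀ v w, (joinG G Om T S n).Adj v w → v ∈ shiftF n Om.verts →
      w ∈ shiftF n Om.verts → ∃ a b, Om.Adj a b ∧ a + n = v ∧ b + n = w := by
    intro v w hadj hv hw
    have hadj' : G.Adj v w ∨ (shiftG n Om).Adj v w ∨
        (v ≠ w ∧ v ∈ joinVerts G Om n ∧ w ∈ joinVerts G Om n ∧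
          ((v = joinA G T ∧ w = joinB Om S n) ∨
            (w = joinA G T ∧ v = joinB Om S n))) := hadj
    have hv' := (hSv v hv).1
    have hw' := (hSv w hw).1
    rcases hadj' with h | h | ⟨_, _, _, hc⟩
    · exfalso
      have := (hGv v (G.support v w h).1).2
      omega
    · have h' : ∃ a b, Om.Adj a b ∧ v = a + n ∧ w = b + n := h
      obtain ⟨a, b, hab, rfl, rfl⟩ := h'
      exact ⟨a, b, hab, rfl, rfl⟩
    · exfalso
      rcases hc with ⟨hvA, _⟩ | ⟨hwA, _⟩
      · have := hAn.2; omega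
      · have := hAn.2; omega
  have hAdjX : ∀ v w, (joinG G Om T S n).Adj v w → v ∈ G.verts →
      w ∈ shiftF n Om.verts → v = joinA G T ∧ w = joinB Om S n := by
    intro v w hadj hv hw
    have hadj' : G.Adj v w ∨ (shiftG n Om).Adj v w ∨
        (v ≠ w ∧ v ∈ joinVerts G Om n ∧ w ∈ joinVerts G Om n ∧
          ((v = joinA G T ∧ w = joinB Om S n) ∨
            (w = joinA G T ∧ v = joinB Om S n))) := hadj
    have hv' := (hGv v hv).2
    have hw' := (hSv w hw).1
    rcases hadj' with h | h | ⟨_, _, _, hc⟩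
    · exfalso
      have := (hGv w (G.support v w h).2).2
      omega
    · exfalso
      have h' : ∃ a b, Om.Adj a b ∧ v = a + n ∧ w = b + n := h
      obtain ⟨a, b, hab, rfl, rfl⟩ := h'
      have := (hOmv a (Om.support a b hab).1).1
      omega
    · rcases hc with hc | ⟨_, hvB⟩
      · exact hc
      · exfalso; rw [hJB] at hvB; omega
  -- tubes
  have hTubeG : ∀ t ∈ T, IsTube (joinG G Om T S n) t := by
    intro t ht
    obtain ⟨hne, hsub, hconn⟩ := hTtube t ht
    refine ⟨hne, hsub.trans hsubV1, fun v hv w hw => ?_⟩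
    exact Relation.ReflTransGen.mono
      (fun a b hab => ⟨hab.1, hab.2.1, Or.inl hab.2.2⟩) _ _ (hconn v hv w hw)
  have hTubeS : ∀ s ∈ S, IsTube (joinG G Om T S n) (shiftF n s) := by
    intro s hs
    obtain ⟨hne, hsub, hconn⟩ := hStube s hs
    refine ⟨hne.image _, (shiftF_subset hsub).trans hsubV2, fun v hv w hw => ?_⟩
    simp only [shiftF, Finset.mem_image] at hv hw
    obtain ⟨a, ha, rfl⟩ := hv
    obtain ⟨b, hb, rfl⟩ := hw
    exact Relation.ReflTransGen.lift (· + n)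
      (fun x y hxy => ⟨mem_shiftF.mpr hxy.1, mem_shiftF.mpr hxy.2.1,
        Or.inr (Or.inl ⟨x, y, hxy.2.2, rfl, rfl⟩)⟩) _ _ (hconn a ha b hb)
  have hAB : (joinG G Om T S n).Adj (joinA G T) (joinB Om S n) := by
    have hAV : joinA G T ∈ joinVerts G Om n := hsubV1 hAfree.1
    have hBV : joinB Om S n ∈ joinVerts G Om n := hsubV2 hBmemS
    have hne : joinA G T ≠ joinB Om S n := by rw [hJB]; omega
    exact Or.inr (Or.inr ⟨hne, hAV, hBV, Or.inl ⟨rfl, rfl⟩⟩)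
  have hVconn : VConn (joinG G Om T S n) (joinVerts G Om n) := by
    have liftG : ∀ v ∈ G.verts, ∀ w ∈ G.verts, Relation.ReflTransGen
        (fun a b => a ∈ joinVerts G Om n ∧ b ∈ joinVerts G Om n ∧
          (joinG G Om T S n).Adj a b) v w := by
      intro v hv w hw
      exact Relation.ReflTransGen.mono
        (fun a b hab => ⟨hsubV1 hab.1, hsubV1 hab.2.1, Or.inl hab.2.2⟩)
        _ _ (hGc.2.2 v hv w hw)
    have liftS : ∀ v ∈ shiftF n Om.verts, ∀ w ∈ shiftF n Om.verts,
        Relation.ReflTransGen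
        (fun a b => a ∈ joinVerts G Om n ∧ b ∈ joinVerts G Om n ∧
          (joinG G Om T S n).Adj a b) v w := by
      intro v hv w hw
      simp only [shiftF, Finset.mem_image] at hv hw
      obtain ⟨a, ha, rfl⟩ := hv
      obtain ⟨b, hb, rfl⟩ := hw
      exact Relation.ReflTransGen.lift (· + n)
        (fun x y hxy => ⟨hsubV2 (mem_shiftF.mpr hxy.1),
          hsubV2 (mem_shiftF.mpr hxy.2.1),
          Or.inr (Or.inl ⟨x, y, hxy.2.2, rfl, rfl⟩)⟩) _ _ (hOmc.2.2 a ha b hb)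
    have hstep : Relation.ReflTransGen
        (fun a b => a ∈ joinVerts G Om n ∧ b ∈ joinVerts G Om n ∧
          (joinG G Om T S n).Adj a b) (joinA G T) (joinB Om S n) :=
      Relation.ReflTransGen.single ⟨hsubV1 hAfree.1, hsubV2 hBmemS, hAB⟩
    have hstep' : Relation.ReflTransGen
        (fun a b => a ∈ joinVerts G Om n ∧ b ∈ joinVerts G Om n ∧
          (joinG G Om T S n).Adj a b) (joinB Om S n) (joinA G T) :=
      Relation.ReflTransGen.single ⟨hsubV2 hBmemS, hsubV1 hAfree.1,
        (joinG G Om T S n).symm _ _ hAB⟩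
    intro v hv w hw
    rcases Finset.mem_union.mp hv with hv1 | hv2 <;>
      rcases Finset.mem_union.mp hw with hw1 | hw2
    · exact liftG v hv1 w hw1
    · exact ((liftG v hv1 _ hAfree.1).trans hstep).trans (liftS _ hBmemS w hw2)
    · exact ((liftS v hv2 _ hBmemS).trans hstep').trans (liftG _ hAfree.1 w hw1)
    · exact liftS v hv2 w hw2
  -- compatibility
  have hc1 : ∀ t ∈ T, ∀ t' ∈ T, t ≠ t' → Compatible (joinG G Om T S n) t t' := by
    intro t ht t' ht' hne
    rcases hTcomp t ht t' ht' hne with h | h | ⟨hd, hedge⟩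
    · exact Or.inl h
    · exact Or.inr (Or.inl h)
    · exact Or.inr (Or.inr ⟨hd, fun ⟨v, hv, w, hw, hadj⟩ => hedge ⟨v, hv, w, hw,
        hAdjG v w hadj ((hTtube t ht).2.1 hv) ((hTtube t' ht').2.1 hw)⟩⟩)
  have hinj : Function.Injective (· + n : ℕ → ℕ) := add_left_injective n
  have hc2 : ∀ s ∈ S, ∀ s' ∈ S, shiftF n s ≠ shiftF n s' →
      Compatible (joinG G Om T S n) (shiftF n s) (shiftF n s') := by
    intro s hs s' hs' hne
    have hne' : s ≠ s' := fun h => hne (by rw [h])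
    rcases hScomp s hs s' hs' hne' with h | h | ⟨hd, hedge⟩
    · exact Or.inl (shiftF_subset h)
    · exact Or.inr (Or.inl (shiftF_subset h))
    · refine Or.inr (Or.inr ⟨(Finset.disjoint_image hinj).mpr hd, ?_⟩)
      rintro ⟨v, hv, w, hw, hadj⟩
      obtain ⟨a, b, hab, rfl, rfl⟩ := hAdjS v w hadj
        ((shiftF_subset (hStube s hs).2.1) hv) ((shiftF_subset (hStube s' hs').2.1) hw)
      exact hedge ⟨a, mem_shiftF.mp hv, b, mem_shiftF.mp hw, hab⟩
  have hdisjGS : ∀ t : Finset ℕ, t ⊆ G.verts → ∀ u : Finset ℕ,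
      u ⊆ shiftF n Om.verts → Disjoint t u := by
    intro t htsub u husub
    rw [Finset.disjoint_left]
    intro x hxt hxu
    have h1 := (hGv x (htsub hxt)).2
    have h2 := (hSv x (husub hxu)).1
    omega
  have hc3 : ∀ t : Finset ℕ, t ⊆ G.verts → joinA G T ∉ t → ∀ u : Finset ℕ,
      u ⊆ shiftF n Om.verts → FarApart (joinG G Om T S n) t u := by
    intro t htsub hA u husub
    refine ⟨hdisjGS t htsub u husub, ?_⟩
    rintro ⟨v, hv, w, hw, hadj⟩
    obtain ⟨hvA, -⟩ := hAdjX v w hadj (htsub hv) (husub hw)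
    exact hA (hvA ▸ hv)
  have hc3' : ∀ t : Finset ℕ, t ⊆ G.verts → ∀ u : Finset ℕ,
      u ⊆ shiftF n Om.verts → joinB Om S n ∉ u →
      FarApart (joinG G Om T S n) t u := by
    intro t htsub u husub hB
    refine ⟨hdisjGS t htsub u husub, ?_⟩
    rintro ⟨v, hv, w, hw, hadj⟩
    obtain ⟨-, hwB⟩ := hAdjX v w hadj (htsub hv) (husub hw)
    exact hB (hwB ▸ hw)
  -- the common construction
  have main : ∀ T' S' : Finset (Finset ℕ), T' ⊆ T → S' ⊆ S →
      (∀ t ∈ T', ∀ s ∈ S', FarApart (joinG G Om T S n) t (shiftF n s)) →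
      IsTubing (joinG G Om T S n) (T' ∪ shiftT n S' ∪ {joinVerts G Om n}) := by
    intro T' S' hT' hS' hcross
    have hmem : ∀ x ∈ T' ∪ shiftT n S' ∪ {joinVerts G Om n},
        x ∈ T' ∨ (∃ s ∈ S', x = shiftF n s) ∨ x = joinVerts G Om n := by
      intro x hx
      rcases Finset.mem_union.mp hx with hx | hx
      · rcases Finset.mem_union.mp hx with hx | hx
        · exact Or.inl hx
        · obtain ⟨s, hs, rfl⟩ := Finset.mem_image.mp hx
          exact Or.inr (Or.inl ⟨s, hs, rfl⟩)
      · exact Or.inr (Or.inr (Finset.mem_singleton.mp hx))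
    have htube : ∀ x ∈ T' ∪ shiftT n S' ∪ {joinVerts G Om n},
        IsTube (joinG G Om T S n) x := by
      intro x hx
      rcases hmem x hx with hx1 | ⟨s, hs, rfl⟩ | rfl
      · exact hTubeG x (hT' hx1)
      · exact hTubeS s (hS' hs)
      · exact ⟨⟨joinA G T, hsubV1 hAfree.1⟩, Finset.Subset.refl _, hVconn⟩
    refine ⟨Finset.mem_union_right _ (Finset.mem_singleton_self _), htube, ?_⟩
    intro x hx y hy hne
    have hxsub := (htube x hx).2.1
    have hysub := (htube y hy).2.1
    rcases hmem x hx with hx1 | ⟨s, hs, rfl⟩ | rfl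
    · rcases hmem y hy with hy1 | ⟨s', hs', rfl⟩ | rfl
      · exact hc1 x (hT' hx1) y (hT' hy1) hne
      · exact Or.inr (Or.inr (hcross x hx1 s' hs'))
      · exact Or.inl hxsub
    · rcases hmem y hy with hy1 | ⟨s', hs', rfl⟩ | rfl
      · exact Or.inr (Or.inr (farApart_symm (hcross y hy1 s hs)))
      · exact hc2 s (hS' hs) s' (hS' hs') hne
      · exact Or.inl hxsub
    · exact Or.inr (Or.inl hysub)
  have hBnotP : ∀ s ∈ S, s ≠ Om.verts → joinB Om S n ∉ shiftF n s := by
    intro s hs hp hmemx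
    rw [hJB] at hmemx
    exact hBfree.2 s hs hp (mem_shiftF.mp hmemx)
  have properT : properTubes G T ⊆ T := Finset.filter_subset _ _
  have properS : properTubes Om S ⊆ S := Finset.filter_subset _ _
  refine ⟨?_, ?_, ?_, ?_⟩
  · intro t ht
    rw [Finset.mem_erase]
    constructor
    · intro hEq
      have h1 : (1 : ℕ) ∈ Om.verts := by rw [hOm, Finset.mem_Icc]; omega
      have h2 : 1 + n ∈ joinVerts G Om n := hsubV2 (mem_shiftF.mpr h1)
      rw [← hEq] at h2
      have := (hGv _ ((hTtube t ht).2.1 h2)).2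
      omega
    · exact Finset.mem_union_left _ (Finset.mem_union_left _ ht)
  · exact main T (properTubes Om S) (Finset.Subset.refl _) properS (fun t ht s hs => by
      have hsp := Finset.mem_filter.mp hs
      exact hc3' t (hTtube t ht).2.1 _ (shiftF_subset (hStube s hsp.1).2.1)
        (hBnotP s hsp.1 hsp.2))
  · exact main (properTubes G T) S properT (Finset.Subset.refl _) (fun t ht s hs => by
      have htp := Finset.mem_filter.mp ht
      exact hc3 t (hTtube t htp.1).2.1 (hAfree.2 t htp.1 htp.2) _
        (shiftF_subset (hStube s hs).2.1))
  · exact main (properTubes G T) (properTubes Om S) properT properS (fun t ht s hs => by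
      have htp := Finset.mem_filter.mp ht
      have hsp := Finset.mem_filter.mp hs
      exact hc3 t (hTtube t htp.1).2.1 (hAfree.2 t htp.1 htp.2) _
        (shiftF_subset (hStube s hsp.1).2.1))
end
end
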